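/- Let P be the Petersen graph, let s and t be adjacent vertices of P, and let P' = P − {s,t}. For every 2-colouring of V(P') in which every monochromatic component has at most 2 vertices, the cardinalities of the two colour classes differ by at most 2; in particular, no such 2-colouring has colour classes of sizes 6 and 2 or 7 and 1 or 8 and 0. -/

import Mathlib

/-- Vertices of the Petersen graph: 2-element subsets of {1,...,5} (modelled as `Fin 5`). -/
abbrev PetersenVert : Type := {p : Finset (Fin 5) // p.card = 2}

/-- The Petersen graph as the Kneser graph K(5,2): two 2-subsets are adjacent iff disjoint. -/
def Petersen : SimpleGraph PetersenVert where
  Adj a b := Disjoint a.1 b.1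
  symm := ⟨fun _ _ h => Disjoint.symm h⟩
  loopless := ⟨by
    intro a h
    have ha : a.1 = ∅ := by simpa using disjoint_self.mp h
    have := a.2
    rw [ha] at this
    simp at this⟩

/-- The vertex set of `P' = P − {s, t}`. -/
def avoidSet (s t : PetersenVert) : Set PetersenVert := {v | v ≠ s ∧ v ≠ t}

/-- `P' = P − {s, t}`: the subgraph of the Petersen graph induced on the vertices
different from `s` and `t`. -/
def Pminus (s t : PetersenVert) : SimpleGraph (avoidSet s t) :=
  Petersen.induce (avoidSet s t)

/-- `v` is one of the (four) vertices of degree 2 of `P' = P − {s, t}`. -/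
def IsDeg2 (s t : PetersenVert) (v : avoidSet s t) : Prop :=
  ((Pminus s t).neighborSet v).ncard = 2

/- ### Auxiliary decidability instances -/

instance : DecidableRel Petersen.Adj := fun a b => by
  unfold Petersen; exact inferInstanceAs (Decidable (Disjoint a.1 b.1))

instance avoidDecPred (s t : PetersenVert) : DecidablePred (· ∈ avoidSet s t) :=
  fun v => decidable_of_iff (v ≠ s ∧ v ≠ t) Iff.rfl

instance avoidFintype (s t : PetersenVert) : Fintype (avoidSet s t) := Subtype.fintype _

instance pminusDecRel (s t : PetersenVert) : DecidableRel (Pminus s t).Adj :=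
  fun a b => by unfold Pminus; exact inferInstanceAs (Decidable (Disjoint a.1.1 b.1.1))

/- ### The key finite check, done by `decide` for one edge and transferred by symmetry -/

def s0 : PetersenVert := ⟨{0,1}, rfl⟩
def t0 : PetersenVert := ⟨{2,3}, rfl⟩

/-- There is a monochromatic path on three vertices. -/
def hasMonoPath (s t : PetersenVert) (c : avoidSet s t → Fin 2) : Prop :=
  ∃ v w x : avoidSet s t, (Pminus s t).Adj v w ∧ (Pminus s t).Adj w x ∧ v ≠ x ∧
    c v = c w ∧ c w = c x

instance (s t : PetersenVert) (c : avoidSet s t → Fin 2) : Decidable (hasMonoPath s t c) :=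
  by unfold hasMonoPath; infer_instance

/-- Some colour class has more than 5 elements. -/
def badSizes (s t : PetersenVert) (c : avoidSet s t → Fin 2) : Prop :=
  5 < (Finset.univ.filter (fun v => c v = 0)).card ∨
  5 < (Finset.univ.filter (fun v => c v = 1)).card

instance (s t : PetersenVert) (c : avoidSet s t → Fin 2) : Decidable (badSizes s t c) :=
  by unfold badSizes; infer_instance

set_option maxHeartbeats 4000000 in
set_option maxRecDepth 100000 in
theorem keydec0 : ∀ c : avoidSet s0 t0 → Fin 2, badSizes s0 t0 c → hasMonoPath s0 t0 c := by
  decide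

set_option maxHeartbeats 4000000 in
set_option maxRecDepth 10000 in
theorem exists_perm : ∀ s t : PetersenVert, Petersen.Adj s t →
    ∃ σ : Equiv.Perm (Fin 5), s.1 = Finset.image σ {0,1} ∧ t.1 = Finset.image σ {2,3} := by
  decide

set_option maxHeartbeats 1000000 in
set_option maxRecDepth 10000 in
theorem card_avoid : ∀ s t : PetersenVert, Petersen.Adj s t →
    Fintype.card (avoidSet s t) = 8 := by
  decide

/-- The automorphism of the Petersen graph induced by a permutation of `Fin 5`. -/
def permMap (σ : Equiv.Perm (Fin 5)) : PetersenVert ≃ PetersenVert where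
  toFun p := ⟨p.1.image σ, by
    rw [Finset.card_image_of_injective _ σ.injective]; exact p.2⟩
  invFun p := ⟨p.1.image σ.symm, by
    rw [Finset.card_image_of_injective _ σ.symm.injective]; exact p.2⟩
  left_inv p := by
    apply Subtype.ext
    simp [Finset.image_image]
  right_inv p := by
    apply Subtype.ext
    simp [Finset.image_image]

lemma adj_permMap (σ : Equiv.Perm (Fin 5)) (a b : PetersenVert) :
    Petersen.Adj (permMap σ a) (permMap σ b) ↔ Petersen.Adj a b := by
  show Disjoint (a.1.image σ) (b.1.image σ) ↔ Disjoint a.1 b.1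
  exact Finset.disjoint_image σ.injective

/-- Transfer of the base case along symmetry: for any adjacent `s, t`, no colouring without
monochromatic 3-paths has a colour class with more than 5 elements. -/
theorem keydec (s t : PetersenVert) (hst : Petersen.Adj s t)
    (c : avoidSet s t → Fin 2) (h : ¬ hasMonoPath s t c) :
    ∀ i : Fin 2, (Finset.univ.filter (fun v => c v = i)).card ≤ 5 := by
  obtain ⟨σ, hs, ht⟩ := exists_perm s t hst
  have hs' : s = permMap σ s0 := Subtype.ext hs
  have ht' : t = permMap σ t0 := Subtype.ext ht
  subst hs' ht'
  -- the equivalence between the two avoid sets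
  have hmem : ∀ v : PetersenVert, v ∈ avoidSet s0 t0 ↔
      permMap σ v ∈ avoidSet (permMap σ s0) (permMap σ t0) := by
    intro v
    simp [avoidSet, (permMap σ).injective.ne_iff]
  let e : avoidSet s0 t0 ≃ avoidSet (permMap σ s0) (permMap σ t0) :=
    (permMap σ).subtypeEquiv hmem
  set c0 : avoidSet s0 t0 → Fin 2 := fun v => c (e v) with hc0
  have hadj : ∀ v w : avoidSet s0 t0,
      (Pminus s0 t0).Adj v w ↔ (Pminus (permMap σ s0) (permMap σ t0)).Adj (e v) (e w) := by
    intro v w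
    show Petersen.Adj v.1 w.1 ↔ Petersen.Adj (permMap σ v.1) (permMap σ w.1)
    exact (adj_permMap σ v.1 w.1).symm
  have h0 : ¬ hasMonoPath s0 t0 c0 := by
    rintro ⟨v, w, x, hvw, hwx, hvx, h1, h2⟩
    exact h ⟨e v, e w, e x, (hadj v w).1 hvw, (hadj w x).1 hwx,
      fun hh => hvx (e.injective hh), h1, h2⟩
  have hb : ¬ badSizes s0 t0 c0 := fun hb => h0 (keydec0 c0 hb)
  rw [badSizes, not_or, not_lt, not_lt] at hb
  intro i
  have hcard : (Finset.univ.filter (fun v => c v = i)).card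
      = (Finset.univ.filter (fun v => c0 v = i)).card := by
    rw [← Fintype.card_subtype, ← Fintype.card_subtype]
    exact Fintype.card_congr ((Equiv.subtypeEquiv e (fun v => Iff.rfl)).symm)
  fin_cases i
  · rw [hcard]; exact hb.1
  · rw [hcard]; exact hb.2

/-- From the hypothesis on monochromatic components, there is no monochromatic 3-path. -/
theorem no_mono_path (s t : PetersenVert) (c : avoidSet s t → Fin 2)
    (hmono : ∀ i : Fin 2,
      ∀ K : ((Pminus s t).induce {v | c v = i}).ConnectedComponent, K.supp.ncard ≤ 2) :
    ¬ hasMonoPath s t c := by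
  rintro ⟨v, w, x, hvw, hwx, hvx, h1, h2⟩
  set i := c v with hi
  have hv : c v = i := rfl
  have hw : c w = i := h1.symm
  have hx : c x = i := (h1.trans h2).symm
  set G := (Pminus s t).induce {u | c u = i} with hG
  let v' : {u : avoidSet s t | c u = i} := ⟨v, hv⟩
  let w' : {u : avoidSet s t | c u = i} := ⟨w, hw⟩
  let x' : {u : avoidSet s t | c u = i} := ⟨x, hx⟩
  have hadj1 : G.Adj v' w' := hvw
  have hadj2 : G.Adj w' x' := hwx
  set K := G.connectedComponentMk v' with hK
  have h1' : v' ∈ K.supp := rfl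
  have h2' : w' ∈ K.supp := by
    rw [SimpleGraph.ConnectedComponent.mem_supp_iff]
    exact SimpleGraph.ConnectedComponent.sound hadj1.symm.reachable
  have h3' : x' ∈ K.supp := by
    rw [SimpleGraph.ConnectedComponent.mem_supp_iff]
    exact SimpleGraph.ConnectedComponent.sound
      ((hadj2.symm.reachable).trans hadj1.symm.reachable)
  have hvw' : v' ≠ w' := fun hh => (hvw.ne) (congrArg Subtype.val hh)
  have hwx' : w' ≠ x' := fun hh => (hwx.ne) (congrArg Subtype.val hh)
  have hvx' : v' ≠ x' := fun hh => hvx (congrArg Subtype.val hh)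
  have hsub : ({v', w', x'} : Set _) ⊆ K.supp := by
    intro u hu
    rcases hu with hu | hu | hu
    · exact hu ▸ h1'
    · exact hu ▸ h2'
    · exact hu ▸ h3'
  have hc3 : ({v', w', x'} : Set _).ncard = 3 := by
    rw [Set.ncard_insert_of_notMem (by simp [hvw', hvx']) (Set.toFinite _),
      Set.ncard_pair hwx']
  have hle := Set.ncard_le_ncard hsub (Set.toFinite _)
  have := hmono i K
  omega

/-- For adjacent vertices `s, t` of the Petersen graph and `P' = P − {s,t}`: in every
2-colouring of `V(P')` all of whose monochromatic components have at most 2 vertices, the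
cardinalities of the two colour classes differ by at most 2; in particular (as `P'` has 8
vertices) no such colouring has colour classes of sizes 6 and 2, 7 and 1, or 8 and 0,
i.e. every colour class has at most 5 vertices. -/
theorem colour_classes_differ_by_at_most_two (s t : PetersenVert) (hst : Petersen.Adj s t)
    (c : avoidSet s t → Fin 2)
    (hmono : ∀ i : Fin 2,
      ∀ K : ((Pminus s t).induce {v | c v = i}).ConnectedComponent, K.supp.ncard ≤ 2) :
    |({v : avoidSet s t | c v = 0}.ncard : ℤ) - ({v : avoidSet s t | c v = 1}.ncard : ℤ)|
        ≤ 2 ∧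
    ∀ i : Fin 2, {v : avoidSet s t | c v = i}.ncard ≤ 5 := by
  have hkey := keydec s t hst c (no_mono_path s t c hmono)
  have hncard : ∀ i : Fin 2, {v : avoidSet s t | c v = i}.ncard
      = (Finset.univ.filter (fun v => c v = i)).card := by
    intro i
    rw [Set.ncard_eq_toFinset_card', Set.toFinset_setOf]
  have hsum : (Finset.univ.filter (fun v => c v = 0)).card
      + (Finset.univ.filter (fun v => c v = 1)).card = 8 := by
    have hnot : (Finset.univ.filter (fun v => ¬ c v = 0))
        = (Finset.univ.filter (fun v => c v = 1)) := by
      apply Finset.filter_congr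
      intro v _
      have : ∀ a : Fin 2, (¬ a = 0) ↔ a = 1 := by decide
      simp only [this]
    rw [← hnot, Finset.card_filter_add_card_filter_not,
      Finset.card_univ, card_avoid s t hst]
  constructor
  · rw [hncard 0, hncard 1, abs_le]
    have h0 := hkey 0
    have h1 := hkey 1
    omega
  · intro i
    rw [hncard i]
    exact hkey i
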